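/- Let p be a prime and W a finite-dimensional vector space over 𝔽ₚ. The degree-p homogeneous component S^p(W) of the symmetric algebra S(W) is spanned (as an 𝔽ₚ-vector space) by the elements x^(p-1)·y, where x and y run over W. -/

import Mathlib

open Finset

lemma inner_ie {A : Type*} [CommRing A] {d : ℕ} (T : Finset (Fin d)) :
    ∑ S : Finset (Fin d), (if T ⊆ S then (-1 : A) ^ S.card else 0)
      = if T = univ then (-1 : A) ^ d else 0 := by
  classical
  rw [← Finset.sum_filter]
  have h2 : ∑ S ∈ univ.filter (fun S => T ⊆ S), (-1 : A) ^ S.card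
      = ∑ U ∈ Tᶜ.powerset, (-1 : A) ^ (U.card + T.card) := by
    refine Finset.sum_nbij' (fun S => S \ T) (fun U => U ∪ T) ?_ ?_ ?_ ?_ ?_
    · intro S hS
      simp only [mem_filter, mem_univ, true_and] at hS
      simp only [mem_powerset]
      intro x hx
      simp only [mem_sdiff] at hx
      simp [hx.2]
    · intro U hU
      simp only [mem_filter, mem_univ, true_and]
      exact subset_union_right
    · intro S hS
      simp only [mem_filter, mem_univ, true_and] at hS
      exact sdiff_union_of_subset hS
    · intro U hU
      simp only [mem_powerset] at hU
      ext x
      simp only [mem_sdiff, mem_union]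
      constructor
      · rintro ⟨h | h, hn⟩
        · exact h
        · exact absurd h hn
      · intro hx
        exact ⟨Or.inl hx, fun hxT => (Finset.mem_compl.mp (hU hx)) hxT⟩
    · intro S hS
      simp only [mem_filter, mem_univ, true_and] at hS
      congr 1
      rw [card_sdiff_of_subset hS, Nat.sub_add_cancel (card_le_card hS)]
  rw [h2]
  simp only [pow_add, ← Finset.sum_mul]
  have h3 : ∑ U ∈ Tᶜ.powerset, (-1 : A) ^ U.card
      = if Tᶜ = ∅ then 1 else 0 := by
    have h := @Finset.sum_powerset_neg_one_pow_card (Fin d) _ Tᶜ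
    calc ∑ U ∈ Tᶜ.powerset, (-1 : A) ^ U.card
        = ((∑ U ∈ Tᶜ.powerset, (-1 : ℤ) ^ U.card : ℤ) : A) := by push_cast; ring_nf
      _ = _ := by rw [h]; split <;> simp
  rw [h3]
  by_cases hT : T = univ
  · subst hT
    simp [Finset.card_univ]
  · have hc : ¬ Tᶜ = ∅ := by
      simpa [Finset.compl_eq_empty_iff] using hT
    simp [hT, hc]

lemma polarization {A : Type*} [CommRing A] (d : ℕ) (ℓ : Fin d → A) :
    ∑ S : Finset (Fin d), (-1 : A) ^ S.card * (∑ i ∈ S, ℓ i) ^ d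
      = (-1 : A) ^ d * (Nat.factorial d : A) * ∏ i, ℓ i := by
  classical
  have expand : ∀ S : Finset (Fin d), (∑ i ∈ S, ℓ i) ^ d
      = ∑ g : Fin d → Fin d, (if ∀ x, g x ∈ S then ∏ x, ℓ (g x) else 0) := by
    intro S
    have h1 : (∑ i ∈ S, ℓ i) ^ d = ∏ _x : Fin d, ∑ i ∈ S, ℓ i := by
      rw [Finset.prod_const, Finset.card_univ, Fintype.card_fin]
    have h2 : Fintype.piFinset (fun _ : Fin d => S)
        = univ.filter (fun g : Fin d → Fin d => ∀ x, g x ∈ S) := by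
      ext g; simp [Fintype.mem_piFinset]
    rw [h1, Finset.prod_univ_sum, h2, Finset.sum_filter]
  have himg : ∀ g : Fin d → Fin d, Finset.image g univ = univ ↔ Function.Bijective g := by
    intro g
    constructor
    · intro h
      refine (Fintype.bijective_iff_surjective_and_card g).mpr ⟨?_, rfl⟩
      intro y
      have hy : y ∈ Finset.image g univ := by rw [h]; exact mem_univ y
      obtain ⟨x, -, hx⟩ := Finset.mem_image.mp hy
      exact ⟨x, hx⟩
    · intro h
      exact Finset.image_univ_of_surjective h.surjective
  calc ∑ S : Finset (Fin d), (-1 : A) ^ S.card * (∑ i ∈ S, ℓ i) ^ d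
      = ∑ S : Finset (Fin d), ∑ g : Fin d → Fin d,
          (if ∀ x, g x ∈ S then (-1 : A) ^ S.card * ∏ x, ℓ (g x) else 0) := by
        refine Finset.sum_congr rfl fun S _ => ?_
        rw [expand S, Finset.mul_sum]
        exact Finset.sum_congr rfl fun g _ => by split <;> simp
    _ = ∑ g : Fin d → Fin d, ∑ S : Finset (Fin d),
          (if Finset.image g univ ⊆ S then (-1 : A) ^ S.card * ∏ x, ℓ (g x) else 0) := by
        rw [Finset.sum_comm]
        refine Finset.sum_congr rfl fun g _ => Finset.sum_congr rfl fun S _ => ?_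
        congr 1
        simp [Finset.image_subset_iff]
    _ = ∑ g : Fin d → Fin d,
          (if Finset.image g univ = univ then (-1 : A) ^ d else 0) * ∏ x, ℓ (g x) := by
        refine Finset.sum_congr rfl fun g _ => ?_
        rw [← inner_ie (Finset.image g univ), Finset.sum_mul]
        exact Finset.sum_congr rfl fun S _ => by split <;> simp [mul_comm, mul_assoc]
    _ = ∑ g ∈ univ.filter (fun g : Fin d → Fin d => Function.Bijective g),
          ((-1 : A) ^ d * ∏ i, ℓ i) := by
        rw [Finset.sum_filter]
        refine Finset.sum_congr rfl fun g _ => ?_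
        by_cases hg : Function.Bijective g
        · rw [if_pos ((himg g).mpr hg), if_pos hg]
          congr 1
          exact Fintype.prod_bijective g hg _ _ (fun x => rfl)
        · rw [if_neg (fun h => hg ((himg g).mp h)), if_neg hg, zero_mul]
    _ = (-1 : A) ^ d * (Nat.factorial d : A) * ∏ i, ℓ i := by
        rw [Finset.sum_const, nsmul_eq_mul]
        have hcard : (univ.filter fun g : Fin d → Fin d => Function.Bijective g).card
            = Nat.factorial d := by
          have hperm : Fintype.card (Equiv.Perm (Fin d)) = Nat.factorial d := by
            simp [Fintype.card_perm]
          rw [← hperm, Fintype.card]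
          refine Finset.card_bij' (fun g hg => Equiv.ofBijective g (mem_filter.mp hg).2)
            (fun e _ => ⇑e) ?_ ?_ ?_ ?_
          · intro g hg; exact mem_univ _
          · intro e _; exact mem_filter.mpr ⟨mem_univ _, e.bijective⟩
          · intro g hg; rfl
          · intro e _; exact Equiv.ext fun x => rfl
        rw [hcard]; ring


open Finset MvPolynomial

section helpers

lemma finsupp_decomp {k : ℕ} (μ : Fin k →₀ ℕ) (j : Fin k) (hj : μ j ≠ 0) :
    μ = (μ - Finsupp.single j 1) + Finsupp.single j 1 := by
  ext i
  simp only [Finsupp.add_apply, Finsupp.tsub_apply, Finsupp.single_apply]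
  by_cases h : j = i
  · subst h; simp; omega
  · simp [h]

lemma degree_single_one {k : ℕ} (j : Fin k) :
    Finsupp.degree (Finsupp.single j 1) = 1 := by
  simp [Finsupp.degree_single]

lemma degree_decomp {k : ℕ} (μ : Fin k →₀ ℕ) (j : Fin k) (hj : μ j ≠ 0) :
    Finsupp.degree (μ - Finsupp.single j 1) + 1 = Finsupp.degree μ := by
  have h2 : Finsupp.degree μ
      = Finsupp.degree (μ - Finsupp.single j 1) + Finsupp.degree (Finsupp.single j 1) := by
    conv_lhs => rw [finsupp_decomp μ j hj]
    simp only [Finsupp.degree_eq_weight_one, map_add]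
  rw [h2, degree_single_one]

lemma exists_prod_X {K : Type*} [CommSemiring K] (k : ℕ) :
    ∀ (d : ℕ) (ν : Fin k →₀ ℕ), Finsupp.degree ν = d →
      ∃ ℓ : Fin d → Fin k, (monomial ν (1 : K)) = ∏ i, X (ℓ i) := by
  intro d
  induction d with
  | zero =>
    intro ν hν
    have h0 : ν = 0 := (Finsupp.degree_eq_zero_iff ν).mp hν
    subst h0
    exact ⟨Fin.elim0, by simp⟩
  | succ d ih =>
    intro ν hν
    obtain ⟨j, hj⟩ : ∃ j, ν j ≠ 0 := by
      by_contra h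
      push_neg at h
      have : ν = 0 := Finsupp.ext fun i => h i
      simp [this] at hν
    have hdeg : Finsupp.degree (ν - Finsupp.single j 1) = d := by
      have := degree_decomp ν j hj
      omega
    obtain ⟨ℓ, hℓ⟩ := ih (ν - Finsupp.single j 1) hdeg
    refine ⟨Fin.snoc ℓ j, ?_⟩
    rw [Fin.prod_univ_castSucc]
    simp only [Fin.snoc_castSucc, Fin.snoc_last]
    rw [← hℓ, X, monomial_mul, mul_one, ← finsupp_decomp ν j hj]

end helpers

theorem stmt2 (p : ℕ) (hp : p.Prime) (k : ℕ) :
    (MvPolynomial.homogeneousSubmodule (Fin k) (ZMod p) p : Submodule (ZMod p) _) =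
      Submodule.span (ZMod p)
        {f : MvPolynomial (Fin k) (ZMod p) |
          ∃ x ∈ MvPolynomial.homogeneousSubmodule (Fin k) (ZMod p) 1,
          ∃ y ∈ MvPolynomial.homogeneousSubmodule (Fin k) (ZMod p) 1,
            f = x ^ (p - 1) * y} := by
  classical
  have : Fact p.Prime := ⟨hp⟩
  set A := MvPolynomial (Fin k) (ZMod p)
  set s : Set A := {f : A |
      ∃ x ∈ MvPolynomial.homogeneousSubmodule (Fin k) (ZMod p) 1,
      ∃ y ∈ MvPolynomial.homogeneousSubmodule (Fin k) (ZMod p) 1,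
        f = x ^ (p - 1) * y} with hs
  -- key lemma: monomial ν 1 * X j ∈ span for deg ν = p - 1
  have key : ∀ (ν : Fin k →₀ ℕ), Finsupp.degree ν = p - 1 → ∀ j : Fin k,
      (monomial ν (1 : ZMod p)) * X j ∈ Submodule.span (ZMod p) s := by
    intro ν hν j
    set d := p - 1 with hd
    obtain ⟨ℓ, hℓ⟩ := exists_prod_X (K := ZMod p) k d ν hν
    have hC : ∀ n : ℕ, ((C ((-1 : ZMod p) ^ n) : A)) = (-1 : A) ^ n := fun n => by
      rw [map_pow, map_neg, map_one]
    have pol := polarization d (fun i => (X (ℓ i) : A))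
    have hmem : ∀ S : Finset (Fin d),
        ((∑ i ∈ S, X (ℓ i)) ^ d * X j : A) ∈ Submodule.span (ZMod p) s := by
      intro S
      apply Submodule.subset_span
      refine ⟨∑ i ∈ S, X (ℓ i), ?_, X j, ?_, rfl⟩
      · exact Submodule.sum_mem _ fun i _ =>
          (mem_homogeneousSubmodule _ _).mpr (isHomogeneous_X _ _)
      · exact (mem_homogeneousSubmodule _ _).mpr (isHomogeneous_X _ _)
    have hsum : (∑ S : Finset (Fin d),
        ((-1 : ZMod p) ^ S.card) • ((∑ i ∈ S, X (ℓ i)) ^ d * X j : A))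
          ∈ Submodule.span (ZMod p) s :=
      Submodule.sum_mem _ fun S _ => Submodule.smul_mem _ _ (hmem S)
    have heq : (∑ S : Finset (Fin d),
        ((-1 : ZMod p) ^ S.card) • ((∑ i ∈ S, X (ℓ i)) ^ d * X j : A))
          = ((-1 : A) ^ d * ((Nat.factorial d : ℕ) : A)) * (monomial ν 1 * X j) := by
      calc ∑ S : Finset (Fin d),
            ((-1 : ZMod p) ^ S.card) • ((∑ i ∈ S, X (ℓ i)) ^ d * X j : A)
          = ∑ S : Finset (Fin d),
            ((-1 : A) ^ S.card * (∑ i ∈ S, X (ℓ i)) ^ d) * X j := by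
            refine Finset.sum_congr rfl fun S _ => ?_
            rw [MvPolynomial.smul_eq_C_mul, hC, mul_assoc]
        _ = (∑ S : Finset (Fin d), (-1 : A) ^ S.card * (∑ i ∈ S, X (ℓ i)) ^ d) * X j := by
            rw [Finset.sum_mul]
        _ = ((-1 : A) ^ d * ((Nat.factorial d : ℕ) : A)) * (monomial ν 1 * X j) := by
            rw [pol, hℓ]; ring
    have hfac : ((Nat.factorial d : ℕ) : A) = -1 := by
      have hw : ((Nat.factorial (p - 1) : ℕ) : ZMod p) = -1 := ZMod.wilsons_lemma p
      rw [hd, ← map_natCast (C : ZMod p →+* A), hw, map_neg, map_one]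
    rw [hfac] at heq
    set c : ZMod p := -(-1 : ZMod p) ^ d with hc
    have heq2 : (∑ S : Finset (Fin d),
        ((-1 : ZMod p) ^ S.card) • ((∑ i ∈ S, X (ℓ i)) ^ d * X j : A))
          = c • (monomial ν 1 * X j) := by
      rw [heq, MvPolynomial.smul_eq_C_mul, hc, map_neg, hC]
      ring
    have hcc : c * c = 1 := by
      rw [hc]
      have : (-(-1 : ZMod p) ^ d) * (-(-1 : ZMod p) ^ d) = ((-1 : ZMod p) ^ d) ^ 2 := by ring
      rw [this, ← pow_mul]
      exact Even.neg_one_pow ⟨d, by ring⟩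
    have : monomial ν (1 : ZMod p) * X j
        = c • (∑ S : Finset (Fin d),
            ((-1 : ZMod p) ^ S.card) • ((∑ i ∈ S, X (ℓ i)) ^ d * X j : A)) := by
      rw [heq2, smul_smul, hcc, one_smul]
    rw [this]
    exact Submodule.smul_mem _ _ hsum
  apply le_antisymm
  · intro f hf
    rw [mem_homogeneousSubmodule] at hf
    rw [← support_sum_monomial_coeff f]
    apply Submodule.sum_mem
    intro μ hμ
    have hdeg : Finsupp.degree μ = p := by
      rw [Finsupp.degree_eq_weight_one]
      exact hf (mem_support_iff.mp hμ)
    obtain ⟨j, hj⟩ : ∃ j, μ j ≠ 0 := by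
      by_contra h
      push_neg at h
      have h0 : μ = 0 := Finsupp.ext fun i => h i
      rw [h0] at hdeg
      simp at hdeg
      exact hp.ne_zero hdeg.symm
    have hν : Finsupp.degree (μ - Finsupp.single j 1) = p - 1 := by
      have := degree_decomp μ j hj
      omega
    have hrepr : monomial μ (coeff μ f)
        = (coeff μ f) • ((monomial (μ - Finsupp.single j 1) (1 : ZMod p)) * X j) := by
      rw [X, monomial_mul, mul_one, ← finsupp_decomp μ j hj, MvPolynomial.smul_monomial,
        smul_eq_mul, mul_one]
    rw [hrepr]
    exact Submodule.smul_mem _ _ (key _ hν j)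
  · rw [Submodule.span_le]
    rintro f ⟨x, hx, y, hy, rfl⟩
    rw [mem_homogeneousSubmodule] at hx hy
    rw [SetLike.mem_coe, mem_homogeneousSubmodule]
    have hxp : MvPolynomial.IsHomogeneous (x ^ (p - 1)) (p - 1) := by
      have := MvPolynomial.IsHomogeneous.prod (Finset.univ : Finset (Fin (p - 1)))
        (fun _ => x) (fun _ => 1) (fun i _ => hx)
      simpa using this
    have := hxp.mul hy
    rwa [Nat.sub_add_cancel hp.one_le] at this
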